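/- arXiv:1609.04098 — 2 statements merged into one kernel-verified Lean document; each statement's English description precedes it below -/
import Mathlib

section
/- Let σ=(Σ_i)_{i∈[k]} be a trace alphabet, κ:[k]→ℕ∪{ω} a capacity function, and A, B two nondeterministic Büchi automata over Σ. If Duplicator has a winning strategy in the multi-buffer game G^κ_σ(A,B) (i.e. A ⊑^κ_σ B), then L(A) ⊆ [L(B)]_σ. -/
open Classical

noncomputable section

namespace MultiBuffer

/-! ### Nondeterministic Büchi automata -/

/-- A nondeterministic Büchi automaton over the alphabet `α`. -/
structure NBA (α : Type) : Type 1 where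
  Q : Type
  finQ : Fintype Q
  init : Q
  δ : Q → α → Set Q
  F : Set Q

variable {α P Q : Type} {k : ℕ}

/-- `r` is (the state sequence of) a run of `A` on the infinite word `w`. -/
def IsRun (A : NBA α) (w : ℕ → α) (r : ℕ → A.Q) : Prop :=
  r 0 = A.init ∧ ∀ n, r (n + 1) ∈ A.δ (r n) (w n)

/-- The state sequence `r` visits accepting states infinitely often. -/
def AcceptingStates (A : NBA α) (r : ℕ → A.Q) : Prop :=
  {n | r n ∈ A.F}.Infinite

/-- The ω-language of a Büchi automaton. -/
def Lang (A : NBA α) : Set (ℕ → α) :=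
  {w | ∃ r, IsRun A w r ∧ AcceptingStates A r}

/-! ### Finite or infinite words, projections and trace equivalence

A finite or infinite word over `α` is represented as a function `ℕ → Option α`
which is `none` from some point on (if finite); infinite words embed via `ofInf`. -/

/-- The infinite word `u` viewed as an element of `Σ^∞`. -/
def ofInf (u : ℕ → α) : ℕ → Option α := fun n => some (u n)

/-- A function `ℕ → Option α` represents a finite or infinite word if after the
first `none` everything is `none`. -/
def Stable (w : ℕ → Option α) : Prop := ∀ n, w n = none → w (n + 1) = none

/-- The number of `i < j` satisfying `p`. -/
def countBelow (p : ℕ → Prop) (j : ℕ) : ℕ := {i | i < j ∧ p i}.ncard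

/-- Position `j` of the word `w` carries a letter belonging to `S`. -/
def InS (S : Set α) (w : ℕ → Option α) (j : ℕ) : Prop := ∃ a ∈ S, w j = some a

/-- The projection `π_S(w)` of the word `w` to the subalphabet `S`: the word obtained
from `w` by deleting all letters not in `S`. -/
def proj (S : Set α) (w : ℕ → Option α) (n : ℕ) : Option α :=
  if h : ∃ j, InS S w j ∧ countBelow (InS S w) j = n then w h.choose else none

/-- Trace equivalence of (finite or infinite) words w.r.t. the trace alphabet
`σ = (Σ_i)_{i ∈ [k]}` : all projections coincide. -/
def TraceEquiv (σ : Fin k → Set α) (u v : ℕ → Option α) : Prop :=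
  ∀ i, proj (σ i) u = proj (σ i) v

/-- The trace closure of a language of infinite words. -/
def closure (σ : Fin k → Set α) (L : Set (ℕ → α)) : Set (ℕ → α) :=
  {v | ∃ u ∈ L, TraceEquiv σ (ofInf u) (ofInf v)}

/-! ### The multi-buffer game -/

/-- A configuration of the multi-buffer game: a state of Spoiler's automaton,
the contents of the `k` buffers, and a state of Duplicator's automaton. -/
structure Conf (α P Q : Type) (k : ℕ) where
  p : P
  bufs : Fin k → List α
  q : Q

/-- Appending the letter `a` to the back of every buffer `i` with `a ∈ σ i`. -/
def push (σ : Fin k → Set α) (bufs : Fin k → List α) (a : α) : Fin k → List α :=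
  fun i => if a ∈ σ i then bufs i ++ [a] else bufs i

/-- Popping the letter `b` from the front of every buffer `i` with `b ∈ σ i`. -/
def pop (σ : Fin k → Set α) (bufs : Fin k → List α) (b : α) : Fin k → List α :=
  fun i => if b ∈ σ i then (bufs i).tail else bufs i

/-- Effect of a Spoiler move `m = (a, p')` on a configuration. -/
def spApply (σ : Fin k → Set α) (c : Conf α P Q k) (m : α × P) : Conf α P Q k :=
  ⟨m.2, push σ c.bufs m.1, c.q⟩

/-- Effect of a (possibly empty) Duplicator move `d = (b₁,q₁)...(b_n,q_n)`. -/
def dupApply (σ : Fin k → Set α) (c : Conf α P Q k) (d : List (α × Q)) : Conf α P Q k :=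
  ⟨c.p, d.foldl (fun bs m => pop σ bs m.1) c.bufs, ((d.getLast?).map Prod.snd).getD c.q⟩

/-- Legality of a Spoiler move: it follows a transition of his automaton. -/
def SpLegal (δA : P → α → Set P) (c : Conf α P Q k) (m : α × P) : Prop :=
  m.2 ∈ δA c.p m.1

/-- Legality of a Duplicator move from a configuration: the moves form a run of her
automaton and each letter is removed from the front of the corresponding buffers. -/
def DupLegal (σ : Fin k → Set α) (δB : Q → α → Set Q) :
    Conf α P Q k → List (α × Q) → Prop
  | _, [] => True
  | c, m :: rest =>
      m.2 ∈ δB c.q m.1 ∧ (∀ i, m.1 ∈ σ i → (c.bufs i).head? = some m.1) ∧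
      DupLegal σ δB ⟨c.p, pop σ c.bufs m.1, m.2⟩ rest

/-- The capacity constraints (checked after a full round). -/
def CapOk (κ : Fin k → ℕ∞) (c : Conf α P Q k) : Prop :=
  ∀ i, ((c.bufs i).length : ℕ∞) ≤ κ i

/-- The list of the first `n` values of the sequence `s`. -/
def hist {β : Type} (s : ℕ → β) (n : ℕ) : List β := List.ofFn (fun i : Fin n => s i)

/-- The configuration of the play after `n` full rounds, when Spoiler plays the
sequence `s` of moves and Duplicator follows the strategy `θ` (which maps the
history of Spoiler moves, including the current one, to her response). -/
def playConf (σ : Fin k → Set α) (θ : List (α × P) → List (α × Q))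
    (c0 : Conf α P Q k) (s : ℕ → α × P) : ℕ → Conf α P Q k
  | 0 => c0
  | n + 1 => dupApply σ (spApply σ (playConf σ θ c0 s n) (s n)) (θ (hist s (n + 1)))

/-- Duplicator's response in round `n`. -/
def resp (θ : List (α × P) → List (α × Q)) (s : ℕ → α × P) (n : ℕ) : List (α × Q) :=
  θ (hist s (n + 1))

/-- Spoiler's move in round `n` is legal. -/
def SpLegalAt (σ : Fin k → Set α) (δA : P → α → Set P) (θ : List (α × P) → List (α × Q))
    (c0 : Conf α P Q k) (s : ℕ → α × P) (n : ℕ) : Prop :=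
  SpLegal δA (playConf σ θ c0 s n) (s n)

/-- Duplicator's response in round `n` is legal and the capacities are respected
after the round. -/
def DupOkAt (σ : Fin k → Set α) (κ : Fin k → ℕ∞) (δB : Q → α → Set Q)
    (θ : List (α × P) → List (α × Q)) (c0 : Conf α P Q k) (s : ℕ → α × P) (n : ℕ) : Prop :=
  DupLegal σ δB (spApply σ (playConf σ θ c0 s n) (s n)) (resp θ s n) ∧
  CapOk κ (playConf σ θ c0 s (n + 1))

/-- The number of occurrences of the letter `a` in Spoiler's word. -/
def spOcc (s : ℕ → α × P) (a : α) : ℕ∞ := {n | (s n).1 = a}.encard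

/-- The number of occurrences of the letter `a` in Duplicator's word. -/
def dupOcc (θ : List (α × P) → List (α × Q)) (s : ℕ → α × P) (a : α) : ℕ∞ :=
  {x : ℕ × ℕ | ∃ m, (resp θ s x.1)[x.2]? = some m ∧ m.1 = a}.encard

/-- Spoiler's run is accepting. -/
def SpAccept (FA : Set P) (s : ℕ → α × P) : Prop := {n | (s n).2 ∈ FA}.Infinite

/-- Duplicator's run is (infinite and) accepting. -/
def DupAccept (FB : Set Q) (θ : List (α × P) → List (α × Q)) (s : ℕ → α × P) : Prop :=
  {n | ∃ m ∈ resp θ s n, m.2 ∈ FB}.Infinite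

/-- Duplicator has a winning strategy in the multi-buffer game (with buffer alphabets
`σ`, capacities `κ`) played on the transition structures `δA`, `δB` with acceptance
sets `FA`, `FB`, starting from the configuration `c0`: she always has legal responses
(as long as Spoiler has played legally), and if the resulting infinite play carries an
accepting run of Spoiler then her own run is infinite and accepting and every letter
occurs equally often in both words (i.e. every letter put into a buffer is eventually
read). Finite plays in which a player is stuck are lost by that player. -/
def DupWinsFrom (σ : Fin k → Set α) (κ : Fin k → ℕ∞) (δA : P → α → Set P)
    (δB : Q → α → Set Q) (FA : Set P) (FB : Set Q) (c0 : Conf α P Q k) : Prop :=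
  ∃ θ : List (α × P) → List (α × Q),
    ∀ s : ℕ → α × P,
      (∀ n, (∀ m ≤ n, SpLegalAt σ δA θ c0 s m) → DupOkAt σ κ δB θ c0 s n) ∧
      ((∀ n, SpLegalAt σ δA θ c0 s n) → SpAccept FA s →
        DupAccept FB θ s ∧ ∀ a : α, spOcc s a = dupOcc θ s a)

/-- The multi-buffer simulation `A ⊑^κ_σ B`. -/
def Simu (σ : Fin k → Set α) (κ : Fin k → ℕ∞) (A B : NBA α) : Prop :=
  DupWinsFrom σ κ A.δ B.δ A.F B.F ⟨A.init, fun _ => [], B.init⟩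



/-! ### Auxiliary lemmas -/

theorem hist_succ {β : Type} (s : ℕ → β) (n : ℕ) :
    hist s (n + 1) = hist s n ++ [s n] := by
  simp only [hist, List.ofFn_succ', List.concat_eq_append, Fin.coe_castSucc, Fin.val_last]

theorem hist_length {β : Type} (s : ℕ → β) (n : ℕ) : (hist s n).length = n := by
  simp [hist]

theorem hist_getElem {β : Type} (s : ℕ → β) {n i : ℕ} (h : i < (hist s n).length) :
    (hist s n)[i] = s i := by
  simp [hist]

theorem hist_prefix {β : Type} (s : ℕ → β) {m n : ℕ} (h : m ≤ n) :
    hist s m <+: hist s n := by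
  induction n with
  | zero => simp_all
  | succ n ih =>
    rcases Nat.lt_succ_iff_lt_or_eq.mp (Nat.lt_succ_of_le h) with h' | rfl
    · exact (ih (Nat.lt_succ_iff.mp h')).trans ⟨[s n], (hist_succ s n).symm⟩
    · exact List.prefix_rfl

theorem setBelow_finite (p : ℕ → Prop) (j : ℕ) : {i | i < j ∧ p i}.Finite :=
  (Set.finite_Iio j).subset (fun i hi => hi.1)

theorem countBelow_zero (p : ℕ → Prop) : countBelow p 0 = 0 := by
  have : {i | i < 0 ∧ p i} = (∅ : Set ℕ) := by ext i; simp
  simp [countBelow, this]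

theorem countBelow_succ (p : ℕ → Prop) (j : ℕ) :
    countBelow p (j + 1) = countBelow p j + (if p j then 1 else 0) := by
  unfold countBelow
  by_cases h : p j
  · rw [if_pos h]
    have hset : {i | i < j + 1 ∧ p i} = insert j {i | i < j ∧ p i} := by
      ext i
      simp only [Set.mem_insert_iff, Set.mem_setOf_eq]
      constructor
      · rintro ⟨hi, hp⟩
        rcases Nat.lt_succ_iff_lt_or_eq.mp hi with h' | rfl
        · exact Or.inr ⟨h', hp⟩
        · exact Or.inl rfl
      · rintro (rfl | ⟨hi, hp⟩)
        · exact ⟨Nat.lt_succ_self _, h⟩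
        · exact ⟨hi.trans (Nat.lt_succ_self _), hp⟩
    rw [hset, Set.ncard_insert_of_notMem (by simp) (setBelow_finite p j)]
  · rw [if_neg h]
    have hset : {i | i < j + 1 ∧ p i} = {i | i < j ∧ p i} := by
      ext i
      simp only [Set.mem_setOf_eq]
      constructor
      · rintro ⟨hi, hp⟩
        rcases Nat.lt_succ_iff_lt_or_eq.mp hi with h' | rfl
        · exact ⟨h', hp⟩
        · exact absurd hp h
      · rintro ⟨hi, hp⟩; exact ⟨hi.trans (Nat.lt_succ_self _), hp⟩
    rw [hset, Nat.add_zero]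

theorem countBelow_mono (p : ℕ → Prop) {m n : ℕ} (h : m ≤ n) :
    countBelow p m ≤ countBelow p n := by
  induction n with
  | zero => simp_all
  | succ n ih =>
    rcases Nat.lt_succ_iff_lt_or_eq.mp (Nat.lt_succ_of_le h) with h' | rfl
    · exact (ih (Nat.lt_succ_iff.mp h')).trans
        (by rw [countBelow_succ]; omega)
    · rfl

theorem countBelow_lt (p : ℕ → Prop) {m n : ℕ} (hm : p m) (hmn : m < n) :
    countBelow p m < countBelow p n := by
  have h1 : countBelow p (m + 1) = countBelow p m + 1 := by
    rw [countBelow_succ, if_pos hm]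
  have := countBelow_mono p (show m + 1 ≤ n from hmn)
  omega

theorem countBelow_injOn {p : ℕ → Prop} {j j' : ℕ} (hj : p j) (hj' : p j')
    (h : countBelow p j = countBelow p j') : j = j' := by
  rcases lt_trichotomy j j' with h' | h' | h'
  · exact absurd h (Nat.ne_of_lt (countBelow_lt p hj h'))
  · exact h'
  · exact absurd h.symm (Nat.ne_of_lt (countBelow_lt p hj' h'))

theorem cb_list (w : ℕ → α) (pb : α → Bool) (m : ℕ) :
    {t | t < m ∧ pb (w t) = true}.ncard = ((hist w m).filter pb).length := by
  induction m with
  | zero =>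
    have : {t | t < 0 ∧ pb (w t) = true} = (∅ : Set ℕ) := by ext t; simp
    simp [this, hist]
  | succ m ih =>
    have hc := countBelow_succ (fun t => pb (w t) = true) m
    unfold countBelow at hc
    rw [hist_succ, List.filter_append, List.length_append, ← ih, hc]
    cases h : pb (w m) <;> simp [h]

theorem countBelow_list (w : ℕ → α) (S : Set α) (m : ℕ) :
    countBelow (fun t => w t ∈ S) m
      = ((hist w m).filter (fun a => decide (a ∈ S))).length := by
  rw [countBelow, ← cb_list w (fun a => decide (a ∈ S)) m]
  congr 1
  ext t
  simp

theorem InS_ofInf (S : Set α) (w : ℕ → α) :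
    InS S (ofInf w) = fun j => w j ∈ S := by
  funext j
  simp only [InS, ofInf, Option.some.injEq]
  apply propext
  constructor
  · rintro ⟨a, ha, rfl⟩; exact ha
  · intro h; exact ⟨w j, h, rfl⟩

theorem proj_ofInf_eq_some {S : Set α} {w : ℕ → α} {j n : ℕ}
    (hj : w j ∈ S) (hc : countBelow (InS S (ofInf w)) j = n) :
    proj S (ofInf w) n = some (w j) := by
  have hmem : InS S (ofInf w) = fun j => w j ∈ S := InS_ofInf S w
  have hex : ∃ j', InS S (ofInf w) j' ∧ countBelow (InS S (ofInf w)) j' = n :=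
    ⟨j, by rw [hmem]; exact hj, hc⟩
  unfold proj
  rw [dif_pos hex]
  obtain ⟨hins, hcb⟩ := hex.choose_spec
  have heq : hex.choose = j := by
    refine countBelow_injOn (p := InS S (ofInf w)) hins ?_ (by rw [hcb, hc])
    rw [hmem]; exact hj
  rw [heq]; rfl

theorem proj_ofInf_eq_none {S : Set α} {w : ℕ → α} {n : ℕ}
    (h : ∀ j, w j ∈ S → countBelow (InS S (ofInf w)) j ≠ n) :
    proj S (ofInf w) n = none := by
  unfold proj
  rw [dif_neg]
  rintro ⟨j, hins, hcb⟩
  have hmem : InS S (ofInf w) = fun j => w j ∈ S := InS_ofInf S w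
  exact h j (by rw [hmem] at hins; exact hins) hcb
/-- L2 : recover the position from a filtered index. -/
theorem filter_hist_getElem?_rev (w : ℕ → α) (pb : α → Bool) :
    ∀ m n (a : α), ((hist w m).filter pb)[n]? = some a →
      ∃ j, j < m ∧ pb (w j) = true ∧ ((hist w j).filter pb).length = n ∧ w j = a := by
  intro m
  induction m with
  | zero => intro n a h; simp [hist] at h
  | succ m ih =>
    intro n a h
    rw [hist_succ, List.filter_append] at h
    by_cases hn : n < ((hist w m).filter pb).length
    · rw [List.getElem?_append, if_pos hn] at h
      obtain ⟨j, hj, h1, h2, h3⟩ := ih n a h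
      exact ⟨j, hj.trans (Nat.lt_succ_self m), h1, h2, h3⟩
    · rw [List.getElem?_append, if_neg hn] at h
      cases hpb : pb (w m)
      · simp [List.filter_cons, hpb] at h
      · simp only [List.filter_cons, hpb, if_true, List.filter_nil] at h
        have hz : n - ((hist w m).filter pb).length = 0 ∧ w m = a := by
          rcases hk : n - ((hist w m).filter pb).length with _ | k
          · refine ⟨rfl, ?_⟩
            rw [hk] at h
            simpa using h
          · rw [hk] at h; simp at h
        refine ⟨m, Nat.lt_succ_self m, hpb, ?_, hz.2⟩
        omega
      
/-- L1 : the filtered index of a position. -/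
theorem filter_hist_getElem?_of (w : ℕ → α) (pb : α → Bool) {j m : ℕ}
    (hjm : j < m) (hp : pb (w j) = true) :
    ((hist w m).filter pb)[((hist w j).filter pb).length]? = some (w j) := by
  have h1 : hist w j = (hist w m).take j := by
    have h := (hist_prefix w (le_of_lt hjm))
    rw [List.prefix_iff_eq_take] at h
    rwa [hist_length] at h
  have hjl : j < (hist w m).length := by rwa [hist_length]
  have h2 : hist w m = hist w j ++ w j :: (hist w m).drop (j + 1) := by
    conv_lhs => rw [← List.take_append_drop j (hist w m)]
    rw [← h1, List.drop_eq_getElem_cons hjl, hist_getElem w hjl]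
  rw [h2, List.filter_append, List.filter_cons, if_pos hp,
    List.getElem?_append_right le_rfl]
  simp

/-- Runs of the transition structure along a list of (letter, state) pairs. -/
def RunList (δB : Q → α → Set Q) : Q → List (α × Q) → Prop
  | _, [] => True
  | q0, m :: rest => m.2 ∈ δB q0 m.1 ∧ RunList δB m.2 rest

def lastQ (q0 : Q) (d : List (α × Q)) : Q := ((d.getLast?).map Prod.snd).getD q0

theorem lastQ_append (q0 : Q) (d d' : List (α × Q)) :
    lastQ q0 (d ++ d') = lastQ (lastQ q0 d) d' := by
  unfold lastQ
  rw [List.getLast?_append]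
  cases h : d'.getLast? <;> simp [h, Option.or]

theorem runList_append (δB : Q → α → Set Q) :
    ∀ (d d' : List (α × Q)) (q0 : Q),
      RunList δB q0 (d ++ d') ↔ RunList δB q0 d ∧ RunList δB (lastQ q0 d) d' := by
  intro d
  induction d with
  | nil => intro d' q0; simp [RunList, lastQ]
  | cons m rest ih =>
    intro d' q0
    have hl : lastQ q0 (m :: rest) = lastQ m.2 rest := by
      cases rest with
      | nil => simp [lastQ]
      | cons x xs =>
        rw [lastQ, lastQ, List.getLast?_cons_cons,
          List.getLast?_eq_getLast (l := x :: xs) (by simp)]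
        simp
    simp only [List.cons_append, RunList, List.append_eq, ih, hl, and_assoc]

theorem runList_getElem (δB : Q → α → Set Q) :
    ∀ (d : List (α × Q)) (q0 : Q), RunList δB q0 d → ∀ t (ht : t < d.length),
      (d[t]).2 ∈ δB (if h0 : t = 0 then q0 else (d[t-1]'(by omega)).2) (d[t]).1 := by
  intro d
  induction d with
  | nil => intro q0 _ t ht; simp at ht
  | cons m rest ih =>
    intro q0 hrun t ht
    match t with
    | 0 => simpa using hrun.1
    | t' + 1 =>
      have h := ih m.2 hrun.2 t' (by simpa using ht)
      cases t' with
      | zero => simpa using h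
      | succ t'' => simpa using h


def Ecat (D : ℕ → List (α × Q)) (n : ℕ) : List (α × Q) :=
  (List.ofFn fun i : Fin n => D i).flatten

theorem Ecat_zero (D : ℕ → List (α × Q)) : Ecat D 0 = [] := by simp [Ecat]

theorem Ecat_succ (D : ℕ → List (α × Q)) (n : ℕ) :
    Ecat D (n + 1) = Ecat D n ++ D n := by
  simp only [Ecat, List.ofFn_succ', List.concat_eq_append, Fin.coe_castSucc, Fin.val_last,
    List.flatten_append, List.flatten_cons, List.flatten_nil, List.append_nil]

theorem Ecat_prefix (D : ℕ → List (α × Q)) {m n : ℕ} (h : m ≤ n) :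
    Ecat D m <+: Ecat D n := by
  induction n with
  | zero => simp_all
  | succ n ih =>
    rcases Nat.lt_succ_iff_lt_or_eq.mp (Nat.lt_succ_of_le h) with h' | rfl
    · exact (ih (Nat.lt_succ_iff.mp h')).trans ⟨D n, (Ecat_succ D n).symm⟩
    · exact List.prefix_rfl

theorem IsPrefix.getElem_eq {l l' : List (α × Q)} (h : l <+: l') {t : ℕ}
    (ht : t < l.length) (ht' : t < l'.length) : l[t] = l'[t] := by
  obtain ⟨u, rfl⟩ := h
  rw [List.getElem_append_left ht]

def flatAt (D : ℕ → List (α × Q)) (hE : ∀ t, ∃ r, t < (Ecat D r).length) (t : ℕ) : α × Q :=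
  (Ecat D (Nat.find (hE t)))[t]'(Nat.find_spec (hE t))

theorem flatAt_spec (D : ℕ → List (α × Q)) (hE : ∀ t, ∃ r, t < (Ecat D r).length)
    (r t : ℕ) (h : t < (Ecat D r).length) : (Ecat D r)[t] = flatAt D hE t := by
  unfold flatAt
  rcases le_total r (Nat.find (hE t)) with hle | hle
  · exact IsPrefix.getElem_eq (Ecat_prefix D hle) h _
  · exact (IsPrefix.getElem_eq (Ecat_prefix D hle) (Nat.find_spec (hE t)) h).symm


theorem dupLegal_runList {σ : Fin k → Set α} {δB : Q → α → Set Q} :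
    ∀ {d : List (α × Q)} {c : Conf α P Q k}, DupLegal σ δB c d → RunList δB c.q d := by
  intro d
  induction d with
  | nil => intro c _; trivial
  | cons m rest ih =>
    rintro c ⟨h1, _, h3⟩
    exact ⟨h1, ih h3⟩

theorem dupLegal_bufs {σ : Fin k → Set α} {δB : Q → α → Set Q} :
    ∀ {d : List (α × Q)} {c : Conf α P Q k}, DupLegal σ δB c d → ∀ i,
      c.bufs i = ((d.map Prod.fst).filter (fun a => decide (a ∈ σ i))) ++
        (d.foldl (fun bs m => pop σ bs m.1) c.bufs) i := by
  intro d
  induction d with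
  | nil => intro c _ i; simp
  | cons m rest ih =>
    rintro c ⟨_, h2, h3⟩ i
    have hih := ih h3 i
    simp only [Conf.mk.injEq] at hih ⊢
    rw [List.map_cons, List.filter_cons, List.foldl_cons]
    by_cases hm : m.1 ∈ σ i
    · rw [if_pos (by simpa using hm)]
      have hhd := h2 i hm
      have hcons : c.bufs i = m.1 :: (c.bufs i).tail := by
        cases hb : c.bufs i with
        | nil => rw [hb] at hhd; simp at hhd
        | cons b t => rw [hb] at hhd; simp at hhd; rw [hhd]; simp
      rw [hcons]
      simp only [List.cons_append, List.cons.injEq, true_and]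
      have : pop σ c.bufs m.1 i = (c.bufs i).tail := by simp [pop, hm]
      rw [← this]
      exact hih
    · rw [if_neg (by simpa using hm)]
      have : pop σ c.bufs m.1 i = c.bufs i := by simp [pop, hm]
      rw [← this]
      exact hih



theorem encard_cnt (w : ℕ → α) (pb : α → Bool) (m : ℕ) :
    {t | t < m ∧ pb (w t) = true}.encard = (((hist w m).filter pb).length : ℕ∞) := by
  have hfin : {t | t < m ∧ pb (w t) = true}.Finite := setBelow_finite _ m
  rw [hfin.encard_eq_coe_toFinset_card, ← Set.ncard_eq_toFinset_card _ hfin, cb_list]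

/-- **Theorem (soundness of multi-buffer simulation).**
Let `σ = (Σ_i)_{i∈[k]}` be a trace alphabet (the finite alphabet `α` is covered by
the `σ i`), `κ : [k] → ℕ ∪ {ω}` a capacity function, and `A`, `B` two NBA over `α`.
If Duplicator has a winning strategy in the multi-buffer game `G^κ_σ(A,B)`
(i.e. `A ⊑^κ_σ B`), then `L(A) ⊆ [L(B)]_σ`. -/
theorem lang_subset_closure_of_simu {α : Type} [Fintype α] {k : ℕ}
    (σ : Fin k → Set α) (hcov : ∀ a : α, ∃ i, a ∈ σ i) (κ : Fin k → ℕ∞)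
    (A B : NBA α) (h : Simu σ κ A B) :
    Lang A ⊆ closure σ (Lang B) := by
  obtain ⟨θ, hθ⟩ := h
  intro w hw
  obtain ⟨r, ⟨hr0, hrstep⟩, hracc⟩ := hw
  set s : ℕ → α × A.Q := fun n => (w n, r (n + 1)) with hs_def
  set c0 : Conf α A.Q B.Q k := ⟨A.init, fun _ => [], B.init⟩ with hc0_def
  -- Spoiler plays legally along the accepting run
  have hp : ∀ n, (playConf σ θ c0 s n).p = r n := by
    intro n
    cases n with
    | zero => exact hr0.symm
    | succ n => rfl
  have hsleg : ∀ n, SpLegalAt σ A.δ θ c0 s n := by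
    intro n
    unfold SpLegalAt SpLegal
    rw [hp n]
    exact hrstep n
  have hdup : ∀ n, DupLegal σ B.δ (spApply σ (playConf σ θ c0 s n) (s n)) (resp θ s n) :=
    fun n => ((hθ s).1 n (fun m _ => hsleg m)).1
  have hspacc : SpAccept A.F s := by
    have h1 : ({n | r n ∈ A.F} \ {0}).Infinite := hracc.diff (Set.finite_singleton 0)
    have h2 : ((fun n => n + 1) ⁻¹' ({n | r n ∈ A.F} \ {0})).Infinite := by
      refine h1.preimage ?_
      rintro m ⟨hm, hm0⟩
      match m, hm0 with
      | m + 1, _ => exact ⟨m, rfl⟩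
    exact h2.mono (fun n hn => hn.1)
  obtain ⟨hdacc, hocc⟩ := (hθ s).2 hsleg hspacc
  -- basic length facts about the concatenation of Duplicator's responses
  have hLen : ∀ {r1 r2 : ℕ}, r1 ≤ r2 →
      (Ecat (resp θ s) r1).length ≤ (Ecat (resp θ s) r2).length :=
    fun h => (Ecat_prefix (resp θ s) h).length_le
  have hLsucc : ∀ rr, (Ecat (resp θ s) (rr + 1)).length
      = (Ecat (resp θ s) rr).length + (resp θ s rr).length := by
    intro rr; rw [Ecat_succ, List.length_append]
  have hkey : ∀ r1 j1 r2 j2 : ℕ, j1 < (resp θ s r1).length → r1 < r2 →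
      (Ecat (resp θ s) r1).length + j1 < (Ecat (resp θ s) r2).length + j2 := by
    intro r1 j1 r2 j2 hj hr12
    have h1 := hLsucc r1
    have h2 := hLen (show r1 + 1 ≤ r2 from hr12)
    omega
  have hginj : Set.InjOn (fun x : ℕ × ℕ => (Ecat (resp θ s) x.1).length + x.2)
      {x : ℕ × ℕ | x.2 < (resp θ s x.1).length} := by
    rintro ⟨r1, j1⟩ h1 ⟨r2, j2⟩ h2 heq
    simp only [Set.mem_setOf_eq] at h1 h2
    simp only at heq
    rcases lt_trichotomy r1 r2 with hlt | hlt | hlt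
    · exact absurd heq (Nat.ne_of_lt (hkey r1 j1 r2 j2 h1 hlt))
    · subst hlt
      have : j1 = j2 := by omega
      simp [this]
    · exact absurd heq.symm (Nat.ne_of_lt (hkey r2 j2 r1 j1 h2 hlt))
  have hpairsub : ∀ a : α,
      {x : ℕ × ℕ | ∃ m, (resp θ s x.1)[x.2]? = some m ∧ m.1 = a}
        ⊆ {x : ℕ × ℕ | x.2 < (resp θ s x.1).length} := by
    rintro a ⟨rr, jd⟩ ⟨m, hm, _⟩
    simp only [Set.mem_setOf_eq]
    exact (List.getElem?_eq_some_iff.mp hm).1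
  -- Duplicator's word is infinite
  have hEx : ∀ t, ∃ rr, t < (Ecat (resp θ s) rr).length := by
    by_contra hno
    push_neg at hno
    obtain ⟨t0, ht0⟩ := hno
    obtain ⟨a0, ha0⟩ : ∃ a : α, {m | (s m).1 = a}.Infinite := by
      by_contra hfin
      push_neg at hfin
      have huniv : (Set.univ : Set ℕ) ⊆ ⋃ a : α, {m | (s m).1 = a} :=
        fun m _ => Set.mem_iUnion.mpr ⟨(s m).1, rfl⟩
      exact Set.infinite_univ
        ((Set.Finite.subset (Set.finite_iUnion
          (fun a => hfin a)) huniv))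
    have hinf : {x : ℕ × ℕ | ∃ m, (resp θ s x.1)[x.2]? = some m ∧ m.1 = a0}.Infinite := by
      have : dupOcc θ s a0 = ⊤ := by
        rw [← hocc a0]
        exact Set.encard_eq_top_iff.mpr ha0
      exact Set.encard_eq_top_iff.mp this
    have hfin2 : ((fun x : ℕ × ℕ => (Ecat (resp θ s) x.1).length + x.2) ''
        {x : ℕ × ℕ | ∃ m, (resp θ s x.1)[x.2]? = some m ∧ m.1 = a0}).Finite := by
      refine (Set.finite_Iio (t0 + 1)).subset ?_
      rintro t ⟨⟨rr, jd⟩, hx, rfl⟩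
      have hjd := hpairsub a0 hx
      simp only [Set.mem_setOf_eq] at hjd
      have h1 := hLsucc rr
      have h2 := ht0 (rr + 1)
      simp only [Set.mem_Iio]
      omega
    exact hinf (Set.Finite.of_finite_image hfin2 (hginj.mono (hpairsub a0)))
  set flt : ℕ → α × B.Q := flatAt (resp θ s) hEx with hflt_def
  set wB : ℕ → α := fun t => (flt t).1 with hwB_def
  set rB : ℕ → B.Q := fun t => match t with
    | 0 => B.init
    | t' + 1 => (flt t').2 with hrB_def
  -- the state component of configurations
  have hq : ∀ n, (playConf σ θ c0 s n).q = lastQ B.init (Ecat (resp θ s) n) := by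
    intro n
    induction n with
    | zero => simp [playConf, Ecat_zero, lastQ, hc0_def]
    | succ n ih =>
      have hstep : (playConf σ θ c0 s (n + 1)).q = lastQ (playConf σ θ c0 s n).q (resp θ s n) := rfl
      rw [hstep, ih, Ecat_succ, lastQ_append]
  have hrun : ∀ n, RunList B.δ B.init (Ecat (resp θ s) n) := by
    intro n
    induction n with
    | zero => rw [Ecat_zero]; trivial
    | succ n ih =>
      rw [Ecat_succ, runList_append]
      refine ⟨ih, ?_⟩
      rw [← hq n]
      have h := dupLegal_runList (hdup n)
      exact h
  -- the run of B on Duplicator's word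
  have hisrun : IsRun B wB rB := by
    refine ⟨rfl, ?_⟩
    intro t
    obtain ⟨rr, hrr⟩ := hEx t
    have h := runList_getElem B.δ (Ecat (resp θ s) rr) B.init (hrun rr) t hrr
    rw [flatAt_spec (resp θ s) hEx rr t hrr] at h
    cases t with
    | zero => simpa using h
    | succ t' =>
      rw [dif_neg (Nat.succ_ne_zero t')] at h
      simp only [Nat.add_sub_cancel] at h
      rw [flatAt_spec (resp θ s) hEx rr t' (by omega)] at h
      exact h
  have haccB : AcceptingStates B rB := by
    have hR : {n | ∃ m ∈ resp θ s n, m.2 ∈ B.F}.Infinite := hdacc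
    set f : ℕ → ℕ := fun n =>
      if hn : ∃ jd, ∃ _ : jd < (resp θ s n).length, ((resp θ s n)[jd]).2 ∈ B.F
      then (Ecat (resp θ s) n).length + hn.choose + 1 else 0 with hf_def
    have hfR : ∀ n ∈ {n | ∃ m ∈ resp θ s n, m.2 ∈ B.F},
        rB (f n) ∈ B.F ∧ (Ecat (resp θ s) n).length < f n ∧
          f n ≤ (Ecat (resp θ s) (n + 1)).length := by
      intro n hn
      obtain ⟨m, hmem, hmF⟩ := hn
      have hex : ∃ jd, ∃ _ : jd < (resp θ s n).length, ((resp θ s n)[jd]).2 ∈ B.F := by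
        obtain ⟨jd, hl, hjd⟩ := List.mem_iff_getElem.mp hmem
        exact ⟨jd, hl, by rw [hjd]; exact hmF⟩
      have hfval : f n = (Ecat (resp θ s) n).length + hex.choose + 1 := by
        rw [hf_def]; simp only [dif_pos hex]
      obtain ⟨hl, hF⟩ := hex.choose_spec
      have hlt : (Ecat (resp θ s) n).length + hex.choose < (Ecat (resp θ s) (n + 1)).length := by
        rw [hLsucc]; omega
      refine ⟨?_, by omega, by rw [hfval, hLsucc]; omega⟩
      rw [hfval]
      show (flt ((Ecat (resp θ s) n).length + hex.choose)).2 ∈ B.F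
      rw [hflt_def, ← flatAt_spec (resp θ s) hEx (n + 1) _ hlt]
      have : (Ecat (resp θ s) (n + 1))[(Ecat (resp θ s) n).length + hex.choose]'hlt
          = (resp θ s n)[hex.choose]'hl := by
        simp only [Ecat_succ]
        rw [List.getElem_append_right (Nat.le_add_right _ _)]
        simp
      rw [this]
      exact hF
    have hinj : Set.InjOn f {n | ∃ m ∈ resp θ s n, m.2 ∈ B.F} := by
      intro n1 h1 n2 h2 heq
      by_contra hne
      obtain ⟨-, hb1, hb2⟩ := hfR n1 h1
      obtain ⟨-, hb3, hb4⟩ := hfR n2 h2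
      rcases Nat.lt_or_ge n1 n2 with hlt | hge
      · have := hLen (show n1 + 1 ≤ n2 from hlt); omega
      · have hlt : n2 < n1 := by omega
        have := hLen (show n2 + 1 ≤ n1 from hlt); omega
    exact (hR.image hinj).mono (by rintro t ⟨n, hn, rfl⟩; exact (hfR n hn).1)
  refine ⟨wB, ⟨rB, hisrun, haccB⟩, ?_⟩
  -- the buffer invariant
  have hinv : ∀ (i : Fin k) (nn : ℕ),
      (((Ecat (resp θ s) nn).map Prod.fst).filter (fun a => decide (a ∈ σ i)))
        ++ (playConf σ θ c0 s nn).bufs i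
        = (hist w nn).filter (fun a => decide (a ∈ σ i)) := by
    intro i nn
    induction nn with
    | zero => simp [Ecat_zero, playConf, hist, hc0_def]
    | succ nn ih =>
      have hstep : (playConf σ θ c0 s (nn + 1)).bufs
          = (resp θ s nn).foldl (fun bs m => pop σ bs m.1)
              (spApply σ (playConf σ θ c0 s nn) (s nn)).bufs := rfl
      have hd := dupLegal_bufs (hdup nn) i
      rw [Ecat_succ, List.map_append, List.filter_append, hist_succ, List.filter_append,
        List.append_assoc, hstep, ← hd]
      have hsp : (spApply σ (playConf σ θ c0 s nn) (s nn)).bufs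
          = push σ (playConf σ θ c0 s nn).bufs (w nn) := rfl
      rw [hsp]
      by_cases hwn : w nn ∈ σ i
      · have hpush : push σ (playConf σ θ c0 s nn).bufs (w nn) i
            = (playConf σ θ c0 s nn).bufs i ++ [w nn] := by simp [push, hwn]
        rw [hpush, ← List.append_assoc, ih]
        simp [List.filter_cons, hwn]
      · have hpush : push σ (playConf σ θ c0 s nn).bufs (w nn) i
            = (playConf σ θ c0 s nn).bufs i := by simp [push, hwn]
        rw [hpush, ih]
        simp [List.filter_cons, hwn]
  have hhistB : ∀ rr, hist wB (Ecat (resp θ s) rr).length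
      = (Ecat (resp θ s) rr).map Prod.fst := by
    intro rr
    refine List.ext_getElem (by simp [hist_length]) ?_
    intro t h1 h2
    rw [hist_getElem, List.getElem_map]
    show (flt t).1 = _
    rw [hflt_def, ← flatAt_spec (resp θ s) hEx rr t (by simpa using h2)]
  intro i
  funext n
  by_cases hB : ∃ j, wB j ∈ σ i ∧ countBelow (InS (σ i) (ofInf wB)) j = n
  · -- the n-th (σ i)-letter exists in Duplicator's word
    obtain ⟨j, hjS, hjc⟩ := hB
    have hcbB : ((hist wB j).filter (fun a => decide (a ∈ σ i))).length = n := by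
      rw [← countBelow_list wB (σ i) j]
      rw [InS_ofInf] at hjc
      exact hjc
    obtain ⟨rr, hrr⟩ := hEx j
    have h1 : ((hist wB (Ecat (resp θ s) rr).length).filter
        (fun a => decide (a ∈ σ i)))[n]? = some (wB j) := by
      rw [← hcbB]
      exact filter_hist_getElem?_of wB _ hrr (by simpa using hjS)
    have hpre : (hist wB (Ecat (resp θ s) rr).length).filter (fun a => decide (a ∈ σ i))
        <+: (hist w rr).filter (fun a => decide (a ∈ σ i)) := by
      rw [hhistB rr]
      exact ⟨(playConf σ θ c0 s rr).bufs i, hinv i rr⟩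
    obtain ⟨tl, htl⟩ := hpre
    have h2 : ((hist w rr).filter (fun a => decide (a ∈ σ i)))[n]? = some (wB j) := by
      rw [← htl, List.getElem?_append, if_pos (List.getElem?_eq_some_iff.mp h1).1]
      exact h1
    obtain ⟨j', hj'm, hpj', hlen', hwj'⟩ := filter_hist_getElem?_rev w _ rr n (wB j) h2
    have hprojA : proj (σ i) (ofInf w) n = some (w j') := by
      refine proj_ofInf_eq_some (by simpa using hpj') ?_
      rw [InS_ofInf, countBelow_list w (σ i) j']
      exact hlen'
    rw [proj_ofInf_eq_some hjS hjc, hprojA, hwj']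
  · -- Duplicator's word has no n-th (σ i)-letter; neither does Spoiler's
    push_neg at hB
    rw [proj_ofInf_eq_none (fun j hj => hB j hj)]
    by_cases hA : ∃ j, w j ∈ σ i ∧ countBelow (InS (σ i) (ofInf w)) j = n
    swap
    · push_neg at hA
      rw [proj_ofInf_eq_none (fun j hj => hA j hj)]
    exfalso
    obtain ⟨j, hjS, hjc⟩ := hA
    -- the count of (σ i)-letters in Duplicator's word is bounded by n
    set cnt : ℕ → ℕ := fun rr =>
      (((Ecat (resp θ s) rr).map Prod.fst).filter (fun a => decide (a ∈ σ i))).length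
      with hcnt_def
    have hbd : ∀ rr, cnt rr ≤ n := by
      intro rr
      by_contra hlt
      push_neg at hlt
      have hlen : n < ((hist wB (Ecat (resp θ s) rr).length).filter
          (fun a => decide (a ∈ σ i))).length := by
        rw [hhistB rr]; exact hlt
      have hsome := List.getElem?_eq_getElem hlen
      obtain ⟨j', _, hpj', hlen', _⟩ := filter_hist_getElem?_rev wB _ _ n _ hsome
      refine hB j' (by simpa using hpj') ?_
      rw [InS_ofInf, countBelow_list wB (σ i) j']
      exact hlen'
    -- r0 realizes the maximal count
    have hcnt0 : cnt 0 = 0 := by simp [hcnt_def, Ecat_zero]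
    obtain ⟨r0, hr0c⟩ : ∃ rr, cnt rr = Nat.findGreatest (fun c => ∃ rr, cnt rr = c) n :=
      Nat.findGreatest_spec (P := fun c => ∃ rr, cnt rr = c) (Nat.zero_le n) ⟨0, hcnt0⟩
    have hcmax : ∀ rr, cnt rr ≤ cnt r0 := by
      intro rr
      rw [hr0c]
      exact Nat.le_findGreatest (hbd rr) ⟨rr, rfl⟩
    -- all (σ i)-letters of Duplicator's word occur before position |E r0|
    have hcw_mono : ∀ {m1 m2 : ℕ}, m1 ≤ m2 →
        ((hist wB m1).filter (fun a => decide (a ∈ σ i))).length ≤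
        ((hist wB m2).filter (fun a => decide (a ∈ σ i))).length :=
      fun h => ((hist_prefix wB h).filter _).length_le
    have hcwE : ∀ rr, ((hist wB (Ecat (resp θ s) rr).length).filter
        (fun a => decide (a ∈ σ i))).length = cnt rr := by
      intro rr; rw [hhistB rr]
    have hSbd : ∀ t, wB t ∈ σ i → t < (Ecat (resp θ s) r0).length := by
      intro t ht
      by_contra hge
      push_neg at hge
      obtain ⟨rr, hrr⟩ := hEx t
      have h1 : ((hist wB (t + 1)).filter (fun a => decide (a ∈ σ i))).length
          = ((hist wB t).filter (fun a => decide (a ∈ σ i))).length + 1 := by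
        rw [hist_succ, List.filter_append, List.length_append]
        simp [ht]
      have h2 := hcw_mono (show t + 1 ≤ (Ecat (resp θ s) rr).length from hrr)
      have h3 := hcw_mono hge
      have h4 := hcmax rr
      have e1 := hcwE rr
      have e2 := hcwE r0
      omega
    -- the filtered Duplicator prefix is a prefix of the filtered Spoiler prefix up to j
    have hlenF : ((hist w j).filter (fun a => decide (a ∈ σ i))).length = n := by
      rw [← countBelow_list w (σ i) j]
      rw [InS_ofInf] at hjc
      exact hjc
    have hpre0 : ((Ecat (resp θ s) r0).map Prod.fst).filter (fun a => decide (a ∈ σ i))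
        <+: (hist w r0).filter (fun a => decide (a ∈ σ i)) :=
      ⟨(playConf σ θ c0 s r0).bufs i, hinv i r0⟩
    have hpre1 : ((Ecat (resp θ s) r0).map Prod.fst).filter (fun a => decide (a ∈ σ i))
        <+: (hist w (max j r0)).filter (fun a => decide (a ∈ σ i)) :=
      hpre0.trans ((hist_prefix w (le_max_right j r0)).filter _)
    have hpre2 : (hist w j).filter (fun a => decide (a ∈ σ i))
        <+: (hist w (max j r0)).filter (fun a => decide (a ∈ σ i)) :=
      (hist_prefix w (le_max_left j r0)).filter _
    have hprefix : ((Ecat (resp θ s) r0).map Prod.fst).filter (fun a => decide (a ∈ σ i))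
        <+: (hist w j).filter (fun a => decide (a ∈ σ i)) := by
      refine List.prefix_of_prefix_length_le hpre1 hpre2 ?_
      rw [hlenF]
      exact hbd r0
    obtain ⟨tlA, htlA⟩ := hprefix
    -- filtering by "= w j" commutes with filtering by "∈ σ i"
    have hff : ∀ l : List α, (l.filter (fun a => decide (a ∈ σ i))).filter
        (fun x => decide (x = w j)) = l.filter (fun x => decide (x = w j)) := by
      intro l
      rw [List.filter_filter]
      refine List.filter_congr ?_
      intro x _
      by_cases hx : x = w j
      · subst hx; simp [hjS]
      · simp [hx]
    -- count of the letter (w j) in Duplicator's word is at most its count in hist w j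
    have hcntle : ((hist wB (Ecat (resp θ s) r0).length).filter
        (fun x => decide (x = w j))).length
        ≤ ((hist w j).filter (fun x => decide (x = w j))).length := by
      rw [← hff (hist wB (Ecat (resp θ s) r0).length), ← hff (hist w j), hhistB r0, ← htlA,
        List.filter_append, List.length_append]
      exact Nat.le_add_right _ _
    -- lower bound for the occurrences of (w j) in Spoiler's word
    have hsub : {m | m < j + 1 ∧ (fun x => decide (x = w j)) (w m) = true}
        ⊆ {m | (s m).1 = w j} := by
      rintro m ⟨_, hm⟩
      simpa using hm
    have hlen1 : ((hist w (j + 1)).filter (fun x => decide (x = w j))).length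
        = ((hist w j).filter (fun x => decide (x = w j))).length + 1 := by
      rw [hist_succ, List.filter_append, List.length_append]
      simp
    have hspOcc : ((((hist w j).filter (fun x => decide (x = w j))).length + 1 : ℕ) : ℕ∞)
        ≤ spOcc s (w j) := by
      have := Set.encard_mono hsub
      rw [encard_cnt w (fun x => decide (x = w j)) (j + 1), hlen1] at this
      exact_mod_cast this
    -- upper bound for the occurrences of (w j) in Duplicator's word
    have himg : (fun x : ℕ × ℕ => (Ecat (resp θ s) x.1).length + x.2) ''
        {x : ℕ × ℕ | ∃ m, (resp θ s x.1)[x.2]? = some m ∧ m.1 = w j}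
        ⊆ {t | t < (Ecat (resp θ s) r0).length ∧
            (fun x => decide (x = w j)) (wB t) = true} := by
      rintro t ⟨⟨rr, jd⟩, ⟨m, hm, hma⟩, rfl⟩
      obtain ⟨hjd, hjdm⟩ := List.getElem?_eq_some_iff.mp hm
      replace hjd : jd < (resp θ s rr).length := hjd
      replace hjdm : (resp θ s rr)[jd]'hjd = m := hjdm
      have hlt : (Ecat (resp θ s) rr).length + jd < (Ecat (resp θ s) (rr + 1)).length := by
        rw [hLsucc]; omega
      have hwBt : wB ((Ecat (resp θ s) rr).length + jd) = w j := by
        show (flt _).1 = _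
        rw [hflt_def, ← flatAt_spec (resp θ s) hEx (rr + 1) _ hlt]
        simp only [Ecat_succ]
        rw [List.getElem_append_right (Nat.le_add_right _ _)]
        simp only [Nat.add_sub_cancel_left]
        rw [hjdm]
        exact hma
      exact ⟨hSbd _ (by rw [hwBt]; exact hjS), by simp [hwBt]⟩
    have hdupOcc : dupOcc θ s (w j)
        ≤ (((hist wB (Ecat (resp θ s) r0).length).filter
            (fun x => decide (x = w j))).length : ℕ∞) := by
      have e := (hginj.mono (hpairsub (w j))).encard_image
      have hrfl : dupOcc θ s (w j)
          = {x : ℕ × ℕ | ∃ m, (resp θ s x.1)[x.2]? = some m ∧ m.1 = w j}.encard := rfl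
      rw [hrfl, ← e]
      exact le_trans (Set.encard_mono himg)
        (le_of_eq (encard_cnt wB (fun x => decide (x = w j)) _))
    -- contradiction
    have hfinal : ((((hist w j).filter (fun x => decide (x = w j))).length + 1 : ℕ) : ℕ∞)
        ≤ (((hist w j).filter (fun x => decide (x = w j))).length : ℕ∞) := by
      refine le_trans hspOcc ?_
      rw [hocc (w j)]
      exact le_trans hdupOcc (by exact_mod_cast hcntle)
    have : (((hist w j).filter (fun x => decide (x = w j))).length + 1 : ℕ)
        ≤ ((hist w j).filter (fun x => decide (x = w j))).length := by
      exact_mod_cast hfinal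
    omega

end MultiBuffer
end
end

section
/- Let T be a tree (a nonempty prefix-closed set of finite sequences of natural numbers, with root ε). Define the Büchi game G(T) as follows: take the graph with node set T ∪ {g} (g a fresh node) and base edges all parent–child pairs (t, t') of T together with an edge (t, g) for every t ∈ T ∪ {g}; replace every base edge (u,v) by a path u → m_{(u,v)} → v through a fresh intermediate node m_{(u,v)}orthogonal to all others; let Own = T ∪ {g} (all intermediate nodes belong to player 1), Fin = T, and initial node ε. Then player 0 has a winning strategy in G(T) if and only if T contains an infinite branch (an infinite sequence all of whose finite prefixes lie in T). -/
open Classical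

noncomputable section

namespace MultiBuffer

variable {α P Q : Type} {k : ℕ}

/-! ### Büchi games -/

/-- A Büchi game `G = (V, E, Own, Fin, v_I)`: the nodes in `Own` belong to player 0,
the others to player 1; player 0 wins an infinite play iff it visits `FinSet`
infinitely often; a player who cannot choose a successor loses. -/
structure BGame (V : Type) where
  E : V → V → Prop
  Own : Set V
  FinSet : Set V
  init : V

namespace BGame

variable {V : Type}

/-- The history of the play `ρ` after `n` steps (current node first). -/
def bhist (ρ : ℕ → V) (n : ℕ) : List V := (List.ofFn (fun i : Fin (n + 1) => ρ i)).reverse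

/-- The finite play histories (current node first) that can arise when player 0
follows the strategy `str` (player 1 moves along arbitrary edges). -/
inductive ReachH (G : BGame V) (str : List V → V) : List V → Prop
  | base : ReachH G str [G.init]
  | step0 {v : V} {h : List V} : ReachH G str (v :: h) → v ∈ G.Own →
      ReachH G str (str (v :: h) :: v :: h)
  | step1 {v w : V} {h : List V} : ReachH G str (v :: h) → v ∉ G.Own → G.E v w →
      ReachH G str (w :: v :: h)

/-- The infinite play `ρ` is consistent with player 0's strategy `str`. -/
def Consistent (G : BGame V) (str : List V → V) (ρ : ℕ → V) : Prop :=
  ρ 0 = G.init ∧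
  ∀ n, (ρ n ∈ G.Own ∧ ρ (n + 1) = str (bhist ρ n)) ∨ (ρ n ∉ G.Own ∧ G.E (ρ n) (ρ (n + 1)))

/-- Player 0 has a winning strategy in the Büchi game `G`: a strategy that always
proposes legal moves at reachable histories ending in a node of player 0 (so player 0
is never stuck, while player 1 getting stuck makes player 0 win the finite play), and
such that every consistent infinite play visits `FinSet` infinitely often. -/
def Wins0 (G : BGame V) : Prop :=
  ∃ str : List V → V,
    (∀ (h : List V) (v : V), ReachH G str (v :: h) → v ∈ G.Own → G.E v (str (v :: h))) ∧
    (∀ ρ : ℕ → V, Consistent G str ρ → {n | ρ n ∈ G.FinSet}.Infinite)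

end BGame

/-! ### Trees and the games `G(T)`, `H(T)` -/

/-- A tree: a nonempty prefix-closed set of finite sequences of natural numbers. -/
def IsTree (T : Set (List ℕ)) : Prop :=
  T.Nonempty ∧ ∀ l ∈ T, ∀ l', l' <+: l → l' ∈ T

/-- `T` contains an infinite branch: an infinite sequence all of whose finite
prefixes lie in `T`. -/
def InfBranch (T : Set (List ℕ)) : Prop :=
  ∃ β : ℕ → ℕ, ∀ n, (List.ofFn fun i : Fin n => β i) ∈ T

/-- The base nodes of the games built from a tree: the tree nodes (`some t`) plus
one fresh node `none` (called `g` resp. `h`). -/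
abbrev BaseNode := Option (List ℕ)

/-- The base edges: parent–child pairs of `T`, an edge from every node of `T` to the
fresh node, and the self-loop on the fresh node. -/
def baseEdge (T : Set (List ℕ)) : BaseNode → BaseNode → Prop
  | some t, some t' => t ∈ T ∧ t' ∈ T ∧ ∃ m, t' = t ++ [m]
  | some t, none => t ∈ T
  | none, none => True
  | none, some _ => False

/-- The node type after replacing every base edge `(u,v)` by a path of length 2
through a fresh intermediate node `m_(u,v)` (represented by `Sum.inr (u,v)`). -/
abbrev SubdivNode := BaseNode ⊕ BaseNode × BaseNode

/-- The subdivided edge relation: `u → m_(u,v) → v` for every base edge `(u,v)`. -/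
def subdivE (T : Set (List ℕ)) : SubdivNode → SubdivNode → Prop := fun x y =>
  (∃ u v, x = Sum.inl u ∧ y = Sum.inr (u, v) ∧ baseEdge T u v) ∨
  (∃ u v, x = Sum.inr (u, v) ∧ y = Sum.inl v ∧ baseEdge T u v)

/-- The Büchi game `G(T)`: the subdivision of the tree `T` with the extra node `g`,
where all base nodes belong to player 0 (the intermediate nodes to player 1), the
winning nodes are the tree nodes, and the play starts at the root `ε`. -/
def gameG (T : Set (List ℕ)) : BGame SubdivNode where
  E := subdivE T
  Own := {x | ∃ b, x = Sum.inl b}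
  FinSet := {x | ∃ t ∈ T, x = Sum.inl (some t)}
  init := Sum.inl (some [])

/-! ### Auxiliary material for `wins0_gameG_iff_infBranch` -/

private lemma ofFnConcat {γ : Type*} (f : ℕ → γ) (n : ℕ) :
    (List.ofFn fun i : Fin (n+1) => f i) = (List.ofFn fun i : Fin n => f i) ++ [f n] := by
  rw [List.ofFn_succ']; simp [List.concat_eq_append]

private lemma bhistSucc {V : Type} (ρ : ℕ → V) (n : ℕ) :
    BGame.bhist ρ (n+1) = ρ (n+1) :: BGame.bhist ρ n := by
  unfold BGame.bhist
  rw [ofFnConcat (fun i => ρ i) (n+1)]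
  simp

private lemma bhistHead {V : Type} (ρ : ℕ → V) (n : ℕ) :
    (BGame.bhist ρ n).head? = some (ρ n) := by
  unfold BGame.bhist
  rw [ofFnConcat (fun i => ρ i) n]
  simp

/-- prefix of a branch -/
private def pref (β : ℕ → ℕ) (n : ℕ) : List ℕ := List.ofFn fun i : Fin n => β i

private lemma prefSucc (β : ℕ → ℕ) (n : ℕ) : pref β (n+1) = pref β n ++ [β n] :=
  ofFnConcat β n

private lemma prefLen (β : ℕ → ℕ) (n : ℕ) : (pref β n).length = n := by
  simp [pref]

/-- Player 0's strategy following the branch `β`. -/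
private def bstr (β : ℕ → ℕ) : List SubdivNode → SubdivNode := fun l =>
  match l.head? with
  | some (Sum.inl (some t)) => Sum.inr (some t, some (t ++ [β t.length]))
  | _ => Sum.inl none

private lemma bstrEval (β : ℕ → ℕ) (l : List SubdivNode) (t : List ℕ)
    (h : l.head? = some (Sum.inl (some t))) :
    bstr β l = Sum.inr (some t, some (t ++ [β t.length])) := by
  unfold bstr; rw [h]

/-- nodes on the branch -/
private def GoodN (β : ℕ → ℕ) (x : SubdivNode) : Prop :=
  (∃ n, x = Sum.inl (some (pref β n))) ∨
  (∃ n, x = Sum.inr (some (pref β n), some (pref β (n+1))))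

private lemma goodReach (T : Set (List ℕ)) (β : ℕ → ℕ) (l : List SubdivNode)
    (hl : BGame.ReachH (gameG T) (bstr β) l) :
    ∀ v h, l = v :: h → GoodN β v := by
  induction hl with
  | base =>
      rintro v h hv
      obtain ⟨rfl, rfl⟩ := List.cons_eq_cons.mp hv.symm
      exact Or.inl ⟨0, rfl⟩
  | @step0 v h _ hOwn ih =>
      rintro v' h' hv'
      obtain ⟨rfl, rfl⟩ := List.cons_eq_cons.mp hv'.symm
      rcases ih v h rfl with ⟨n, rfl⟩ | ⟨n, rfl⟩
      · rw [bstrEval β (Sum.inl (some (pref β n)) :: h) (pref β n) rfl]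
        exact Or.inr ⟨n, by rw [prefLen, ← prefSucc]⟩
      · obtain ⟨b, hb⟩ := hOwn
        exact absurd hb (by simp)
  | @step1 v w h _ hOwn hE ih =>
      rintro v' h' hv'
      obtain ⟨rfl, rfl⟩ := List.cons_eq_cons.mp hv'.symm
      rcases ih v h rfl with ⟨n, rfl⟩ | ⟨n, rfl⟩
      · exact absurd ⟨_, rfl⟩ hOwn
      · rcases hE with ⟨u, v0, hu, _, _⟩ | ⟨u, v0, hu, hw, _⟩
        · exact absurd hu (by simp)
        · obtain ⟨h1, h2⟩ := Prod.mk.injEq .. ▸ Sum.inr.inj hu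
          subst hw
          exact Or.inl ⟨n+1, by rw [h2]⟩

private lemma goodConsistent (T : Set (List ℕ)) (β : ℕ → ℕ) (ρ : ℕ → SubdivNode)
    (hc : BGame.Consistent (gameG T) (bstr β) ρ) : ∀ n, GoodN β (ρ n) := by
  intro n
  induction n with
  | zero => rw [hc.1]; exact Or.inl ⟨0, rfl⟩
  | succ n ih =>
      rcases hc.2 n with ⟨hOwn, heq⟩ | ⟨hOwn, hE⟩
      · rcases ih with ⟨k, hk⟩ | ⟨k, hk⟩
        · rw [heq, bstrEval β _ (pref β k) (by rw [bhistHead, hk])]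
          exact Or.inr ⟨k, by rw [prefLen, ← prefSucc]⟩
        · obtain ⟨b, hb⟩ := hOwn
          rw [hk] at hb
          exact absurd hb (by simp)
      · rcases ih with ⟨k, hk⟩ | ⟨k, hk⟩
        · exact absurd ⟨_, hk⟩ hOwn
        · rcases hE with ⟨u, v0, hu, _, _⟩ | ⟨u, v0, hu, hw, _⟩
          · rw [hk] at hu; exact absurd hu (by simp)
          · rw [hk] at hu
            obtain ⟨h1, h2⟩ := Prod.mk.injEq .. ▸ Sum.inr.inj hu
            rw [hw]
            exact Or.inl ⟨k+1, by rw [h2]⟩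

/-- Backward direction: an infinite branch yields a winning strategy. -/
private lemma backwardDir (T : Set (List ℕ)) (β : ℕ → ℕ)
    (hβ : ∀ n, (List.ofFn fun i : Fin n => β i) ∈ T) :
    BGame.Wins0 (gameG T) := by
  have hpref : ∀ n, pref β n ∈ T := hβ
  refine ⟨bstr β, ?_, ?_⟩
  · intro h v hreach hOwn
    rcases goodReach T β _ hreach v h rfl with ⟨n, rfl⟩ | ⟨n, rfl⟩
    · rw [bstrEval β (Sum.inl (some (pref β n)) :: h) (pref β n) rfl]
      exact Or.inl ⟨some (pref β n), some (pref β n ++ [β (pref β n).length]),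
        rfl, rfl, hpref n, by rw [prefLen, ← prefSucc]; exact hpref (n+1),
        β (pref β n).length, rfl⟩
    · obtain ⟨b, hb⟩ := hOwn
      exact absurd hb (by simp)
  · intro ρ hc
    have hgood := goodConsistent T β ρ hc
    have key : ∀ n, ρ n ∈ (gameG T).FinSet ∨ ρ (n+1) ∈ (gameG T).FinSet := by
      intro n
      rcases hgood n with ⟨k, hk⟩ | ⟨k, hk⟩
      · exact Or.inl ⟨pref β k, hpref k, hk⟩
      · rcases hc.2 n with ⟨hOwn, _⟩ | ⟨_, hE⟩
        · obtain ⟨b, hb⟩ := hOwn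
          rw [hk] at hb
          exact absurd hb (by simp)
        · rcases hE with ⟨u, v0, hu, _, _⟩ | ⟨u, v0, hu, hw, _⟩
          · rw [hk] at hu; exact absurd hu (by simp)
          · rw [hk] at hu
            obtain ⟨h1, h2⟩ := Prod.mk.injEq .. ▸ Sum.inr.inj hu
            rw [hw, ← h2]
            exact Or.inr ⟨pref β (k+1), hpref (k+1), rfl⟩
    by_contra hfin
    obtain ⟨N, hN⟩ := (Set.not_infinite.mp hfin).bddAbove
    rcases key (N+1) with h | h
    · exact absurd (hN h) (by omega)
    · exact absurd (hN h) (by omega)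

/-! Forward direction machinery -/

private def fnext (str : List SubdivNode → SubdivNode) : List SubdivNode → SubdivNode
  | l@(Sum.inl _ :: _) => str l
  | Sum.inr (_, v) :: _ => Sum.inl v
  | [] => Sum.inl none

private def playL (str : List SubdivNode → SubdivNode) : ℕ → List SubdivNode
  | 0 => [Sum.inl (some ([] : List ℕ))]
  | n+1 => fnext str (playL str n) :: playL str n

private def fpl (str : List SubdivNode → SubdivNode) (n : ℕ) : SubdivNode :=
  (playL str n).headD (Sum.inl none)

private lemma fnextInl (str : List SubdivNode → SubdivNode) (b : BaseNode)
    (t : List SubdivNode) : fnext str (Sum.inl b :: t) = str (Sum.inl b :: t) := rfl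

private lemma fnextInr (str : List SubdivNode → SubdivNode) (u v : BaseNode)
    (t : List SubdivNode) : fnext str (Sum.inr (u, v) :: t) = Sum.inl v := rfl

private lemma playLSucc (str : List SubdivNode → SubdivNode) (n : ℕ) :
    playL str (n+1) = fnext str (playL str n) :: playL str n := rfl

private lemma fplSucc (str : List SubdivNode → SubdivNode) (n : ℕ) :
    fpl str (n+1) = fnext str (playL str n) := rfl

private lemma playLCons (str : List SubdivNode → SubdivNode) (n : ℕ) :
    ∃ t, playL str n = fpl str n :: t := by
  cases n with
  | zero => exact ⟨[], rfl⟩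
  | succ n => exact ⟨playL str n, rfl⟩

private lemma bhistEq (str : List SubdivNode → SubdivNode) (n : ℕ) :
    BGame.bhist (fpl str) n = playL str n := by
  induction n with
  | zero =>
      unfold BGame.bhist
      rw [ofFnConcat (fun i => fpl str i) 0]
      simp [playL]
      rfl
  | succ n ih => rw [bhistSucc, ih]; rfl

section Forward

variable {T : Set (List ℕ)} {str : List SubdivNode → SubdivNode}

private lemma fInv
    (hstr : ∀ (h : List SubdivNode) (v : SubdivNode), BGame.ReachH (gameG T) str (v :: h) →
      v ∈ (gameG T).Own → (gameG T).E v (str (v :: h))) :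
    ∀ n, BGame.ReachH (gameG T) str (playL str n) ∧
      ((∃ b, fpl str n = Sum.inl b) ∨ ∃ u v, fpl str n = Sum.inr (u, v) ∧ baseEdge T u v) := by
  intro n
  induction n with
  | zero => exact ⟨BGame.ReachH.base, Or.inl ⟨some [], rfl⟩⟩
  | succ n ih =>
      obtain ⟨hre, hsh⟩ := ih
      obtain ⟨t, ht⟩ := playLCons str n
      rcases hsh with ⟨b, hb⟩ | ⟨u, v, huv, hbe⟩
      · have hplay : playL str n = Sum.inl b :: t := by rw [ht, hb]
        have hre' : BGame.ReachH (gameG T) str (Sum.inl b :: t) := hplay ▸ hre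
        have hOwn : (Sum.inl b : SubdivNode) ∈ (gameG T).Own := ⟨b, rfl⟩
        have hE := hstr t (Sum.inl b) hre' hOwn
        have hps : playL str (n+1) = str (Sum.inl b :: t) :: (Sum.inl b :: t) := by
          rw [playLSucc, hplay, fnextInl]
        have hf : fpl str (n+1) = str (Sum.inl b :: t) := by
          rw [fplSucc, hplay, fnextInl]
        constructor
        · rw [hps]; exact BGame.ReachH.step0 hre' hOwn
        · rcases hE with ⟨u, v, hu, hv, hbe⟩ | ⟨u, v, hu, _, _⟩
          · have hub : b = u := Sum.inl.inj hu
            subst hub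
            exact Or.inr ⟨b, v, by rw [hf, hv], hbe⟩
          · exact absurd hu (by simp)
      · have hplay : playL str n = Sum.inr (u, v) :: t := by rw [ht, huv]
        have hps : playL str (n+1) = Sum.inl v :: (Sum.inr (u, v) :: t) := by
          rw [playLSucc, hplay, fnextInr]
        have hNot : (Sum.inr (u, v) : SubdivNode) ∉ (gameG T).Own := by
          rintro ⟨b, hb⟩; exact absurd hb (by simp)
        have hE : (gameG T).E (Sum.inr (u, v)) (Sum.inl v) := Or.inr ⟨u, v, rfl, rfl, hbe⟩
        refine ⟨?_, Or.inl ⟨v, ?_⟩⟩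
        · rw [hps]; exact BGame.ReachH.step1 (hplay ▸ hre) hNot hE
        · rw [fplSucc, hplay, fnextInr]

private lemma fCons
    (hstr : ∀ (h : List SubdivNode) (v : SubdivNode), BGame.ReachH (gameG T) str (v :: h) →
      v ∈ (gameG T).Own → (gameG T).E v (str (v :: h))) :
    BGame.Consistent (gameG T) str (fpl str) := by
  refine ⟨rfl, fun n => ?_⟩
  obtain ⟨hre, hsh⟩ := fInv hstr n
  obtain ⟨t, ht⟩ := playLCons str n
  rcases hsh with ⟨b, hb⟩ | ⟨u, v, huv, hbe⟩
  · have hplay : playL str n = Sum.inl b :: t := by rw [ht, hb]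
    left
    refine ⟨⟨b, hb⟩, ?_⟩
    rw [fplSucc, bhistEq, hplay, fnextInl]
  · have hplay : playL str n = Sum.inr (u, v) :: t := by rw [ht, huv]
    right
    constructor
    · rintro ⟨b, hb⟩; rw [huv] at hb; exact absurd hb (by simp)
    · have h1 : fpl str (n+1) = Sum.inl v := by rw [fplSucc, hplay, fnextInr]
      rw [huv, h1]
      exact Or.inr ⟨u, v, rfl, rfl, hbe⟩

private lemma fStepB
    (hstr : ∀ (h : List SubdivNode) (v : SubdivNode), BGame.ReachH (gameG T) str (v :: h) →
      v ∈ (gameG T).Own → (gameG T).E v (str (v :: h)))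
    (m : ℕ) (b : BaseNode) (hb : fpl str m = Sum.inl b) :
    ∃ v, fpl str (m+1) = Sum.inr (b, v) ∧ baseEdge T b v ∧ fpl str (m+2) = Sum.inl v := by
  obtain ⟨hre, _⟩ := fInv hstr m
  obtain ⟨t, ht⟩ := playLCons str m
  have hplay : playL str m = Sum.inl b :: t := by rw [ht, hb]
  have hE := hstr t (Sum.inl b) (hplay ▸ hre) ⟨b, rfl⟩
  rcases hE with ⟨u, v, hu, hv, hbe⟩ | ⟨u, v, hu, _, _⟩
  · have hub : b = u := Sum.inl.inj hu
    subst hub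
    have h1 : fpl str (m+1) = Sum.inr (b, v) := by rw [fplSucc, hplay, fnextInl]; exact hv
    have hp1 : playL str (m+1) = Sum.inr (b, v) :: playL str m := by
      rw [playLSucc, hplay, fnextInl, hv]
    have h2 : fpl str (m+2) = Sum.inl v := by rw [fplSucc, hp1, fnextInr]
    exact ⟨v, h1, hbe, h2⟩
  · exact absurd hu (by simp)

private lemma forwardDir (hwin : BGame.Wins0 (gameG T)) : InfBranch T := by
  obtain ⟨str, hstr, hw⟩ := hwin
  have hS := hw (fpl str) (fCons hstr)
  set B : ℕ → BaseNode := fun n => Sum.elim id (fun _ => none) (fpl str (2*n)) with hBdef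
  have hBeq : ∀ n, fpl str (2*n) = Sum.inl (B n) := by
    intro n
    induction n with
    | zero => rfl
    | succ n ih =>
        obtain ⟨v, h1, hbe, h2⟩ := fStepB hstr (2*n) (B n) ih
        have h2n : 2*(n+1) = 2*n+2 := by ring
        have hBv : B (n+1) = v := by
          show Sum.elim id (fun _ => none) (fpl str (2*(n+1))) = v
          rw [h2n, h2]; rfl
        rw [h2n, h2, hBv]
  have hBedge : ∀ n, baseEdge T (B n) (B (n+1)) := by
    intro n
    obtain ⟨v, h1, hbe, h2⟩ := fStepB hstr (2*n) (B n) (hBeq n)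
    have h2n : 2*(n+1) = 2*n+2 := by ring
    have hv : Sum.inl (B (n+1)) = (Sum.inl v : SubdivNode) := by
      rw [← hBeq (n+1), h2n, h2]
    rw [Sum.inl.inj hv]
    exact hbe
  have hodd : ∀ n, ∃ p : BaseNode × BaseNode, fpl str (2*n+1) = Sum.inr p := by
    intro n
    obtain ⟨v, h1, _, _⟩ := fStepB hstr (2*n) (B n) (hBeq n)
    exact ⟨(B n, v), h1⟩
  have hSome : ∀ n, ∃ t, B n = some t := by
    intro n
    cases hBn : B n with
    | some t => exact ⟨t, rfl⟩
    | none =>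
        exfalso
        have hnone : ∀ k, B (n+k) = none := by
          intro k
          induction k with
          | zero => exact hBn
          | succ k ih =>
              have hbe := hBedge (n+k)
              rw [ih] at hbe
              cases h' : B (n+k+1) with
              | none => rfl
              | some t => rw [h'] at hbe; exact absurd hbe (by simp [baseEdge])
        have hsub : {m | fpl str m ∈ (gameG T).FinSet} ⊆ Set.Iio (2*n) := by
          intro m hm
          obtain ⟨t, htT, hmt⟩ := hm
          rcases Nat.even_or_odd m with ⟨k, hk⟩ | ⟨k, hk⟩
          · have hk' : m = 2*k := by omega
            rw [hk', hBeq k] at hmt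
            have hBk : B k = some t := Sum.inl.inj hmt
            by_contra hge
            have hkn : n ≤ k := by simp only [Set.mem_Iio] at hge; omega
            have hnk := hnone (k - n)
            rw [show n + (k - n) = k from by omega] at hnk
            rw [hnk] at hBk
            exact absurd hBk (by simp)
          · obtain ⟨p, hp⟩ := hodd k
            rw [show m = 2*k+1 from by omega, hp] at hmt
            exact absurd hmt (by simp)
        exact ((Set.finite_Iio (2*n)).subset hsub).not_infinite hS
  choose tn htn using hSome
  have hedge : ∀ n, tn n ∈ T ∧ tn (n+1) ∈ T ∧ ∃ m, tn (n+1) = tn n ++ [m] := by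
    intro n
    have hbe := hBedge n
    rw [htn n, htn (n+1)] at hbe
    exact hbe
  have hm : ∀ n, ∃ m, tn (n+1) = tn n ++ [m] := fun n => (hedge n).2.2
  choose β hβ using hm
  have ht0 : tn 0 = [] := by
    have h1 := htn 0
    have h0 : B 0 = some [] := rfl
    rw [h0] at h1
    exact (Option.some.inj h1).symm
  have hprefEq : ∀ n, tn n = List.ofFn (fun i : Fin n => β i) := by
    intro n
    induction n with
    | zero => simpa using ht0
    | succ n ih => rw [hβ n, ih, ← ofFnConcat]
  exact ⟨β, fun n => by rw [← hprefEq n]; exact (hedge n).1⟩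

end Forward

/-- **Lemma.** Player 0 has a winning strategy in the Büchi game `G(T)` iff the
tree `T` contains an infinite branch. -/
theorem wins0_gameG_iff_infBranch (T : Set (List ℕ)) (hT : IsTree T) :
    BGame.Wins0 (gameG T) ↔ InfBranch T := by
  constructor
  · exact fun h => forwardDir h
  · rintro ⟨β, hβ⟩; exact backwardDir T β hβ

end MultiBuffer
end
end
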